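/- For c ≥ 2 and all n ∈ ℤ, the rational functions x_n defined by x_{n+1} = (x_n^c + 1)/x_{n−1} satisfy: x_n is a Laurent polynomial in x_1 and x_2 with integer coefficients (the Laurent phenomenon for A(c,c)). -/

import Mathlib

set_option maxHeartbeats 1000000

open MvPolynomial Finset

noncomputable section
namespace L19

abbrev A : Type := MvPolynomial (Fin 2) ℤ
abbrev KK : Type := FractionRing (MvPolynomial (Fin 2) ℚ)

def uu : KK := algebraMap (MvPolynomial (Fin 2) ℚ) KK (X 0)
def vv : KK := algebraMap (MvPolynomial (Fin 2) ℚ) KK (X 1)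

def ι : A →+* KK := (MvPolynomial.aeval (R := ℤ) ![uu, vv]).toRingHom

def ev : A →+* ℤ := MvPolynomial.eval (fun _ => (1 : ℤ))
def ev0 : A →+* ℤ := MvPolynomial.eval (fun _ => (0 : ℤ))

lemma uu_ne : uu ≠ 0 := by
  simp only [uu, ne_eq, map_eq_zero_iff _ (IsFractionRing.injective (MvPolynomial (Fin 2) ℚ) KK)]
  exact X_ne_zero 0

lemma vv_ne : vv ≠ 0 := by
  simp only [vv, ne_eq, map_eq_zero_iff _ (IsFractionRing.injective (MvPolynomial (Fin 2) ℚ) KK)]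
  exact X_ne_zero 1

lemma ι_X0 : ι (X 0) = uu := by simp [ι]
lemma ι_X1 : ι (X 1) = vv := by simp [ι]

lemma ι_eq : ι = (algebraMap (MvPolynomial (Fin 2) ℚ) KK).comp
    (MvPolynomial.map (Int.castRingHom ℚ)) := by
  apply MvPolynomial.ringHom_ext
  · intro a
    simp [ι]
  · intro i
    fin_cases i <;> simp [ι, uu, vv]

lemma ι_inj : Function.Injective ι := by
  rw [ι_eq]
  exact (IsFractionRing.injective (MvPolynomial (Fin 2) ℚ) KK).comp
    (MvPolynomial.map_injective _ Int.cast_injective)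

lemma prime_X0 : Prime (X 0 : A) := by
  rw [← MulEquiv.prime_iff (MvPolynomial.finSuccEquiv ℤ 1).toMulEquiv]
  have : (MvPolynomial.finSuccEquiv ℤ 1).toMulEquiv (X 0 : A) = Polynomial.X :=
    MvPolynomial.finSuccEquiv_X_zero
  rw [this]
  exact Polynomial.prime_X

lemma prime_X1 : Prime (X 1 : A) := by
  rw [← MulEquiv.prime_iff (MvPolynomial.renameEquiv ℤ (Equiv.swap (0 : Fin 2) 1)).toMulEquiv]
  have : (MvPolynomial.renameEquiv ℤ (Equiv.swap (0 : Fin 2) 1)).toMulEquiv (X 1 : A)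
      = (X 0 : A) := by
    simp [MvPolynomial.renameEquiv]
  rw [this]
  exact prime_X0

lemma prime_Xi (i : Fin 2) : Prime (X i : A) := by
  fin_cases i
  · exact prime_X0
  · exact prime_X1


lemma ev_X (i : Fin 2) : ev (X i) = 1 := by simp [ev]
lemma ev0_X (i : Fin 2) : ev0 (X i) = 0 := by simp [ev0]

lemma not_dvd_of_ev0 (i : Fin 2) {q : A} (h : ev0 q ≠ 0) : ¬ X i ∣ q := by
  rintro ⟨d, rfl⟩
  apply h
  rw [map_mul, ev0_X, zero_mul]

/-- helper: `ι` of a polynomial times monomial, with integer exponent bookkeeping. -/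
lemma ι_shift (g : A) (a b m0 m1 : ℤ) (h0 : m0 ≤ a) (h1 : m1 ≤ b) :
    ι (g * X 0 ^ (a - m0).toNat * X 1 ^ (b - m1).toNat) * uu ^ m0 * vv ^ m1
      = ι g * uu ^ a * vv ^ b := by
  rw [map_mul, map_mul, map_pow, map_pow, ι_X0, ι_X1,
    ← zpow_natCast uu ((a - m0).toNat), ← zpow_natCast vv ((b - m1).toNat),
    Int.toNat_of_nonneg (by omega : (0:ℤ) ≤ a - m0),
    Int.toNat_of_nonneg (by omega : (0:ℤ) ≤ b - m1)]
  rw [show ι g * uu ^ (a - m0) * vv ^ (b - m1) * uu ^ m0 * vv ^ m1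
      = ι g * (uu ^ (a - m0) * uu ^ m0) * (vv ^ (b - m1) * vv ^ m1) by ring,
    ← zpow_add₀ uu_ne, ← zpow_add₀ vv_ne]
  ring_nf

lemma clear {g g' : A} {a b a' b' : ℤ}
    (h : ι g * uu ^ a * vv ^ b = ι g' * uu ^ a' * vv ^ b') :
    g * X 0 ^ (a - min a a').toNat * X 1 ^ (b - min b b').toNat
      = g' * X 0 ^ (a' - min a a').toNat * X 1 ^ (b' - min b b').toNat := by
  apply ι_inj
  have e1 := ι_shift g a b (min a a') (min b b') (min_le_left _ _) (min_le_left _ _)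
  have e2 := ι_shift g' a' b' (min a a') (min b b') (min_le_right _ _) (min_le_right _ _)
  have : ι (g * X 0 ^ (a - min a a').toNat * X 1 ^ (b - min b b').toNat) * uu ^ (min a a') * vv ^ (min b b')
      = ι (g' * X 0 ^ (a' - min a a').toNat * X 1 ^ (b' - min b b').toNat) * uu ^ (min a a') * vv ^ (min b b') := by
    rw [e1, e2, h]
  have hu : uu ^ (min a a') ≠ 0 := zpow_ne_zero _ uu_ne
  have hv : vv ^ (min b b') ≠ 0 := zpow_ne_zero _ vv_ne
  exact mul_right_cancel₀ hu (mul_right_cancel₀ hv this)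

/-- the subring of "Laurent" elements. -/
def LS : Subring KK where
  carrier := {z | ∃ (g : A) (a b : ℤ), z = ι g * uu ^ a * vv ^ b}
  zero_mem' := ⟨0, 0, 0, by simp⟩
  one_mem' := ⟨1, 0, 0, by simp⟩
  neg_mem' := by rintro z ⟨g, a, b, rfl⟩; exact ⟨-g, a, b, by rw [map_neg]; ring⟩
  mul_mem' := by
    rintro _ _ ⟨g, a, b, rfl⟩ ⟨g', a', b', rfl⟩
    exact ⟨g * g', a + a', b + b', by
      rw [map_mul, zpow_add₀ uu_ne, zpow_add₀ vv_ne]; ring⟩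
  add_mem' := by
    rintro _ _ ⟨g, a, b, rfl⟩ ⟨g', a', b', rfl⟩
    refine ⟨g * X 0 ^ (a - min a a').toNat * X 1 ^ (b - min b b').toNat
        + g' * X 0 ^ (a' - min a a').toNat * X 1 ^ (b' - min b b').toNat,
      min a a', min b b', ?_⟩
    rw [map_add, add_mul, add_mul,
      ι_shift g a b _ _ (min_le_left _ _) (min_le_left _ _),
      ι_shift g' a' b' _ _ (min_le_right _ _) (min_le_right _ _)]

lemma mem_LS {z : KK} (h : z ∈ LS) : ∃ (g : A) (a b : ℤ), z = ι g * uu ^ a * vv ^ b := h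

lemma strip {g : A} (hg : g ≠ 0) :
    ∃ (e f : ℕ) (h : A), g = X 0 ^ e * X 1 ^ f * h ∧ ¬ X 0 ∣ h ∧ ¬ X 1 ∣ h := by
  obtain ⟨e, b, hb, rfl⟩ := WfDvdMonoid.max_power_factor hg prime_X0.irreducible
  have hb0 : b ≠ 0 := by rintro rfl; simp at hg
  obtain ⟨f, h, hh, rfl⟩ := WfDvdMonoid.max_power_factor hb0 prime_X1.irreducible
  refine ⟨e, f, h, by ring, ?_, hh⟩
  intro hd
  exact hb (Dvd.dvd.mul_left hd _)

lemma unit_of_dvd_red {g d : A} (hg0 : ¬ X 0 ∣ g) (hg1 : ¬ X 1 ∣ g) (hdg : d ∣ g)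
    {a b : ℕ} (hdm : d ∣ X 0 ^ a * X 1 ^ b) : IsUnit d := by
  by_contra hu
  have hgne : g ≠ 0 := by rintro rfl; exact hg0 (dvd_zero _)
  have hd0 : d ≠ 0 := by rintro rfl; exact hgne (zero_dvd_iff.mp hdg)
  obtain ⟨π, hπi, hπd⟩ := WfDvdMonoid.exists_irreducible_factor hu hd0
  have hπ : Prime π := (UniqueFactorizationMonoid.irreducible_iff_prime).mp hπi
  have hπm : π ∣ X 0 ^ a * X 1 ^ b := hπd.trans hdm
  have : π ∣ X 0 ∨ π ∣ X 1 := by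
    rcases hπ.dvd_or_dvd hπm with h | h
    · exact Or.inl (hπ.dvd_of_dvd_pow h)
    · exact Or.inr (hπ.dvd_of_dvd_pow h)
  rcases this with h | h
  · exact hg0 (((hπi.associated_of_dvd prime_X0.irreducible h).symm.dvd.trans hπd).trans hdg)
  · exact hg1 (((hπi.associated_of_dvd prime_X1.irreducible h).symm.dvd.trans hπd).trans hdg)

lemma relPrime_mono {g : A} (hg0 : ¬ X 0 ∣ g) (hg1 : ¬ X 1 ∣ g) (a b : ℕ) :
    IsRelPrime g (X 0 ^ a * X 1 ^ b) :=
  fun _ hdg hdm => unit_of_dvd_red hg0 hg1 hdg hdm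


lemma pow_rep {z : KK} {s : A} {γ δ : ℤ} (h : z = ι s * uu ^ γ * vv ^ δ) (c : ℕ) :
    z ^ c = ι (s ^ c) * uu ^ ((c : ℤ) * γ) * vv ^ ((c : ℤ) * δ) := by
  subst h
  rw [mul_pow, mul_pow, map_pow, ← zpow_natCast (uu ^ γ) c, ← zpow_natCast (vv ^ δ) c,
    ← zpow_mul, ← zpow_mul, mul_comm γ, mul_comm δ]

/-- canonical numerator of `z ^ c + 1` where `z = ι s * uu^γ * vv^δ`. -/
def Wc (c : ℕ) (s : A) (γ δ : ℤ) : A :=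
  s ^ c * (X 0 ^ ((c : ℤ) * γ).toNat * X 1 ^ ((c : ℤ) * δ).toNat)
    + X 0 ^ (-((c : ℤ) * γ)).toNat * X 1 ^ (-((c : ℤ) * δ)).toNat

lemma Wc_eq {z : KK} {s : A} {γ δ : ℤ} (h : z = ι s * uu ^ γ * vv ^ δ) (c : ℕ) :
    z ^ c + 1 = ι (Wc c s γ δ) * uu ^ (min ((c : ℤ) * γ) 0) * vv ^ (min ((c : ℤ) * δ) 0) := by
  have h1 := ι_shift (s ^ c) ((c : ℤ) * γ) ((c : ℤ) * δ) (min ((c : ℤ) * γ) 0)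
    (min ((c : ℤ) * δ) 0) (min_le_left _ _) (min_le_left _ _)
  have h2 := ι_shift 1 0 0 (min ((c : ℤ) * γ) 0) (min ((c : ℤ) * δ) 0)
    (min_le_right _ _) (min_le_right _ _)
  simp only [map_one, one_mul, zpow_zero, mul_one] at h2
  have e0 : ((c : ℤ) * γ - min ((c : ℤ) * γ) 0).toNat = ((c : ℤ) * γ).toNat := by omega
  have e1 : ((c : ℤ) * δ - min ((c : ℤ) * δ) 0).toNat = ((c : ℤ) * δ).toNat := by omega
  have f0 : ((0 : ℤ) - min ((c : ℤ) * γ) 0).toNat = (-((c : ℤ) * γ)).toNat := by omega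
  have f1 : ((0 : ℤ) - min ((c : ℤ) * δ) 0).toNat = (-((c : ℤ) * δ)).toNat := by omega
  rw [e0, e1] at h1
  rw [f0, f1] at h2
  rw [pow_rep h c, ← h1, ← h2, Wc, map_add, add_mul, add_mul, mul_assoc (s ^ c), map_mul]

lemma ev_Wc (c : ℕ) (s : A) (γ δ : ℤ) : ev (Wc c s γ δ) = ev s ^ c + 1 := by
  simp [Wc, ev]


def Inv (c : ℕ) (z : ℕ → KK) (k : ℕ) : Prop :=
  ∃ (w r s : A) (κ lam α β γ δ : ℤ),
    z k = ι w * uu ^ κ * vv ^ lam ∧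
    z (k+1) = ι r * uu ^ α * vv ^ β ∧
    z (k+2) = ι s * uu ^ γ * vv ^ δ ∧
    (¬ X 0 ∣ r) ∧ (¬ X 1 ∣ r) ∧ 0 < ev r ∧
    (¬ X 0 ∣ s) ∧ (¬ X 1 ∣ s) ∧ 0 < ev s ∧
    IsRelPrime r s ∧
    z (k+2) * z k = z (k+1) ^ c + 1 ∧
    r ∣ Wc c s γ δ

lemma step {c : ℕ} (hc : 2 ≤ c) {z : ℕ → KK}
    (hrec : ∀ k, z (k+1) ≠ 0 → z (k+3) * z (k+1) = z (k+2) ^ c + 1)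
    {k : ℕ} (h : Inv c z k) : Inv c z (k+1) := by
  obtain ⟨w, r, s, κ, lam, α, β, γ, δ, hw, hr, hs, hr0, hr1, hre, hs0, hs1, hse,
    hcop, hE0, hdvd⟩ := h
  have hcne : c ≠ 0 := by omega
  have hrne : r ≠ 0 := by rintro rfl; simp at hre
  have hιr : ι r ≠ 0 := fun h0 => hrne (ι_inj (by rw [h0, map_zero]))
  have hz1 : z (k+1) ≠ 0 := by
    rw [hr]
    exact mul_ne_zero (mul_ne_zero hιr (zpow_ne_zero _ uu_ne)) (zpow_ne_zero _ vv_ne)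
  have hE1 : z (k+3) * z (k+1) = z (k+2) ^ c + 1 := hrec k hz1
  set m0 := min ((c : ℤ) * γ) 0 with hm0
  set m1 := min ((c : ℤ) * δ) 0 with hm1
  have hNeq : z (k+2) ^ c + 1 = ι (Wc c s γ δ) * uu ^ m0 * vv ^ m1 := Wc_eq hs c
  obtain ⟨t0, ht0⟩ := hdvd
  have hevW : 0 < ev (Wc c s γ δ) := by rw [ev_Wc]; positivity
  have hevt0 : 0 < ev t0 := by
    have hm : ev (Wc c s γ δ) = ev r * ev t0 := by rw [ht0, map_mul]
    nlinarith [hm, hre, hevW]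
  have ht0ne : t0 ≠ 0 := by rintro rfl; simp at hevt0
  have hz3 : z (k+3) = ι t0 * uu ^ (m0 - α) * vv ^ (m1 - β) := by
    have h4 : ι t0 * uu ^ (m0 - α) * vv ^ (m1 - β) * z (k+1)
        = ι (Wc c s γ δ) * uu ^ m0 * vv ^ m1 := by
      rw [hr]
      calc ι t0 * uu ^ (m0 - α) * vv ^ (m1 - β) * (ι r * uu ^ α * vv ^ β)
          = (ι r * ι t0) * (uu ^ (m0 - α) * uu ^ α) * (vv ^ (m1 - β) * vv ^ β) := by ring
        _ = ι (r * t0) * uu ^ m0 * vv ^ m1 := by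
            rw [← map_mul, ← zpow_add₀ uu_ne, ← zpow_add₀ vv_ne, sub_add_cancel, sub_add_cancel]
        _ = ι (Wc c s γ δ) * uu ^ m0 * vv ^ m1 := by rw [← ht0]
    exact mul_right_cancel₀ hz1 (by rw [hE1, hNeq, h4])
  obtain ⟨e, f, t, htt, hT0, hT1⟩ := strip ht0ne
  have hevt : 0 < ev t := by
    have he : ev t0 = ev t := by
      rw [htt, map_mul, map_mul, map_pow, map_pow, ev_X, ev_X, one_pow, one_pow,
        one_mul, one_mul]
    omega
  set γ' := m0 - α + e with hγ'
  set δ' := m1 - β + f with hδ'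
  have hz3' : z (k+3) = ι t * uu ^ γ' * vv ^ δ' := by
    rw [hz3, htt, map_mul, map_mul, map_pow, map_pow, ι_X0, ι_X1,
      ← zpow_natCast uu e, ← zpow_natCast vv f, hγ', hδ',
      zpow_add₀ uu_ne, zpow_add₀ vv_ne]
    ring
  have htdvd : t ∣ t0 := ⟨X 0 ^ e * X 1 ^ f, by rw [htt]; ring⟩
  have hcop' : IsRelPrime s t := by
    intro d hds hdt
    have hdW : d ∣ Wc c s γ δ := (hdt.trans htdvd).trans ⟨r, by rw [ht0]; ring⟩
    have h1 : d ∣ s ^ c * (X 0 ^ ((c:ℤ)*γ).toNat * X 1 ^ ((c:ℤ)*δ).toNat) :=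
      dvd_mul_of_dvd_left (hds.trans (dvd_pow_self s hcne)) _
    have hsub : Wc c s γ δ - s ^ c * (X 0 ^ ((c:ℤ)*γ).toNat * X 1 ^ ((c:ℤ)*δ).toNat)
        = X 0 ^ (-((c:ℤ)*γ)).toNat * X 1 ^ (-((c:ℤ)*δ)).toNat := by
      rw [Wc]; ring
    have hdm : d ∣ X 0 ^ (-((c:ℤ)*γ)).toNat * X 1 ^ (-((c:ℤ)*δ)).toNat := by
      rw [← hsub]
      exact dvd_sub hdW h1
    exact unit_of_dvd_red hs0 hs1 hds hdm
  -- the key identity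
  set Aa := z (k+2) ^ c + 1 with hAa
  set S := ∑ i ∈ Finset.range c, Aa ^ i with hS
  have hz1c : z (k+1) ^ c = z (k+2) * z k - 1 := eq_sub_iff_add_eq.mpr hE0.symm
  have key : z (k+1) ^ c * (z (k+3) ^ c + 1) = z (k+2) * (z (k+2) ^ (c-1) * S + z k) := by
    have h1 : (z (k+1) * z (k+3)) ^ c = Aa ^ c := by rw [mul_comm (z (k+1)) (z (k+3)), hE1]
    have hgeom : S * (Aa - 1) = Aa ^ c - 1 := geom_sum_mul Aa c
    have hAm : Aa - 1 = z (k+2) ^ c := by rw [hAa]; ring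
    have hpow : z (k+2) ^ c = z (k+2) ^ (c-1) * z (k+2) := by
      conv_lhs => rw [show c = (c-1)+1 by omega]
      rw [pow_succ]
    calc z (k+1) ^ c * (z (k+3) ^ c + 1)
        = (z (k+1) * z (k+3)) ^ c + z (k+1) ^ c := by rw [mul_pow]; ring
      _ = Aa ^ c + (z (k+2) * z k - 1) := by rw [h1, hz1c]
      _ = (Aa ^ c - 1) + z (k+2) * z k := by ring
      _ = S * (Aa - 1) + z (k+2) * z k := by rw [hgeom]
      _ = S * (z (k+2) ^ (c-1) * z (k+2)) + z (k+2) * z k := by rw [hAm, hpow]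
      _ = z (k+2) * (z (k+2) ^ (c-1) * S + z k) := by ring
  have hB : (z (k+2) ^ (c-1) * S + z k) ∈ LS := by
    have h2 : z (k+2) ∈ LS := ⟨s, γ, δ, hs⟩
    have h0 : z k ∈ LS := ⟨w, κ, lam, hw⟩
    have hA : Aa ∈ LS := ⟨Wc c s γ δ, m0, m1, hNeq⟩
    exact add_mem (mul_mem (pow_mem h2 _) (sum_mem (fun i _ => pow_mem hA i))) h0
  obtain ⟨G, q0, q1, hG⟩ := hB
  have hWt : z (k+3) ^ c + 1
      = ι (Wc c t γ' δ') * uu ^ (min ((c:ℤ) * γ') 0) * vv ^ (min ((c:ℤ) * δ') 0) :=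
    Wc_eq hz3' c
  have hrc : z (k+1) ^ c = ι (r ^ c) * uu ^ ((c:ℤ) * α) * vv ^ ((c:ℤ) * β) := pow_rep hr c
  set n0 := min ((c:ℤ) * γ') 0 with hn0
  set n1 := min ((c:ℤ) * δ') 0 with hn1
  have hkey2 : ι (r ^ c * Wc c t γ' δ') * uu ^ ((c:ℤ)*α + n0) * vv ^ ((c:ℤ)*β + n1)
      = ι (s * G) * uu ^ (γ + q0) * vv ^ (δ + q1) := by
    rw [map_mul, map_mul, zpow_add₀ uu_ne, zpow_add₀ vv_ne, zpow_add₀ uu_ne, zpow_add₀ vv_ne]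
    calc ι (r ^ c) * ι (Wc c t γ' δ') * (uu ^ ((c:ℤ)*α) * uu ^ n0) * (vv ^ ((c:ℤ)*β) * vv ^ n1)
        = (ι (r ^ c) * uu ^ ((c:ℤ)*α) * vv ^ ((c:ℤ)*β))
            * (ι (Wc c t γ' δ') * uu ^ n0 * vv ^ n1) := by ring
      _ = z (k+1) ^ c * (z (k+3) ^ c + 1) := by rw [← hrc, ← hWt]
      _ = z (k+2) * (z (k+2) ^ (c-1) * S + z k) := key
      _ = (ι s * uu ^ γ * vv ^ δ) * (ι G * uu ^ q0 * vv ^ q1) := by rw [← hs, ← hG]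
      _ = ι s * ι G * (uu ^ γ * uu ^ q0) * (vv ^ δ * vv ^ q1) := by ring
  have hcl := clear hkey2
  set p : ℕ := ((c:ℤ)*α + n0 - min ((c:ℤ)*α + n0) (γ + q0)).toNat with hp
  set q : ℕ := ((c:ℤ)*β + n1 - min ((c:ℤ)*β + n1) (δ + q1)).toNat with hq
  have hdv : s ∣ Wc c t γ' δ' * (r ^ c * (X 0 ^ p * X 1 ^ q)) := by
    refine ⟨G * X 0 ^ (γ + q0 - min ((c:ℤ)*α + n0) (γ + q0)).toNat
      * X 1 ^ (δ + q1 - min ((c:ℤ)*β + n1) (δ + q1)).toNat, ?_⟩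
    rw [show s * (G * X 0 ^ (γ + q0 - min ((c:ℤ)*α + n0) (γ + q0)).toNat
      * X 1 ^ (δ + q1 - min ((c:ℤ)*β + n1) (δ + q1)).toNat)
      = s * G * X 0 ^ (γ + q0 - min ((c:ℤ)*α + n0) (γ + q0)).toNat
      * X 1 ^ (δ + q1 - min ((c:ℤ)*β + n1) (δ + q1)).toNat from by ring, ← hcl]
    ring
  have hrel : IsRelPrime s (r ^ c * (X 0 ^ p * X 1 ^ q)) :=
    (hcop.symm.pow_right).mul_right (relPrime_mono hs0 hs1 p q)
  have hfinal : s ∣ Wc c t γ' δ' := hrel.dvd_of_dvd_mul_right hdv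
  exact ⟨r, s, t, α, β, γ, δ, γ', δ', hr, hs, hz3', hs0, hs1, hse,
    hT0, hT1, hevt, hcop', hE1, hfinal⟩


lemma Wc_neg (c : ℕ) (s : A) (a b : ℕ) :
    Wc c s (-(a:ℤ)) (-(b:ℤ)) = s ^ c + X 0 ^ (c*a) * X 1 ^ (c*b) := by
  rw [Wc]
  have e1 : ((c:ℤ) * -(a:ℤ)) = -((c*a : ℕ) : ℤ) := by push_cast; ring
  have e2 : ((c:ℤ) * -(b:ℤ)) = -((c*b : ℕ) : ℤ) := by push_cast; ring
  rw [e1, e2, neg_neg, neg_neg, Int.toNat_natCast, Int.toNat_natCast,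
    show (-((c*a : ℕ) : ℤ)).toNat = 0 by omega,
    show (-((c*b : ℕ) : ℤ)).toNat = 0 by omega]
  ring

lemma base_dvd (c : ℕ) (hc : c ≠ 0) (i j : Fin 2) :
    (X j ^ c + 1 : A) ∣ ((X j^c+1)^c + X i^c)^c + X i ^(c*c) * X j ^ c := by
  have h1 : (X j ^ c + 1 : A) ∣ (((X j^c+1)^c + X i^c)^c - (X i^c)^c) := by
    have h0 := sub_dvd_pow_sub_pow ((X j^c+1)^c + X i^c : A) (X i^c) c
    have h2 : ((X j^c+1)^c + X i^c) - X i^c = ((X j^c+1 : A))^c := by ring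
    rw [h2] at h0
    exact (dvd_pow_self _ hc).trans h0
  have h3 : (X j ^ c + 1 : A) ∣ X i^(c*c) * (X j^c + 1) := Dvd.dvd.mul_left dvd_rfl _
  have h4 : ((X j^c+1)^c + X i^c)^c + X i ^(c*c) * X j ^ c
      = ((((X j^c+1) : A)^c + X i^c)^c - (X i^c)^c) + X i^(c*c) * (X j^c + 1) := by
    rw [← pow_mul]; ring
  rw [h4]; exact dvd_add h1 h3

lemma ev0_base (c : ℕ) (hc : c ≠ 0) (i j : Fin 2) :
    ev0 (((X j^c+1)^c + X i^c : A)) = 1 := by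
  simp [ev0, zero_pow hc]

lemma ev0_base' (c : ℕ) (hc : c ≠ 0) (j : Fin 2) : ev0 ((X j^c+1 : A)) = 1 := by
  simp [ev0, zero_pow hc]

lemma base_cop (c : ℕ) (hc : c ≠ 0) (i j : Fin 2)
    (h0 : ¬ X 0 ∣ (X j^c+1 : A)) (h1 : ¬ X 1 ∣ (X j^c+1 : A))
    (hm : ∀ d : A, d ∣ X i ^ c → d ∣ X 0 ^ c * X 1 ^ c) :
    IsRelPrime ((X j^c+1 : A)) ((X j^c+1)^c + X i^c) := by
  intro d hdr hds
  have hdx : d ∣ X i ^ c := by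
    have h2 : ((X j^c+1)^c + X i^c : A) - (X j^c+1)^c = X i ^ c := by ring
    rw [← h2]
    exact dvd_sub hds (hdr.trans (dvd_pow_self _ hc))
  exact unit_of_dvd_red h0 h1 hdr (hm d hdx)

lemma goal_of_rep {ξ : KK} {p : A} {a b : ℤ} (h : ξ = ι p * uu ^ a * vv ^ b) :
    ∃ (P : A) (i j : ℕ), ξ * uu ^ i * vv ^ j = ι P := by
  refine ⟨p * X 0 ^ (a - min a 0).toNat * X 1 ^ (b - min b 0).toNat,
    (-(min a 0)).toNat, (-(min b 0)).toNat, ?_⟩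
  have hsh := ι_shift p a b (min a 0) (min b 0) (min_le_left _ _) (min_le_left _ _)
  rw [h, ← hsh, ← zpow_natCast uu ((-(min a 0)).toNat), ← zpow_natCast vv ((-(min b 0)).toNat),
    Int.toNat_of_nonneg (by omega : (0:ℤ) ≤ -(min a 0)),
    Int.toNat_of_nonneg (by omega : (0:ℤ) ≤ -(min b 0))]
  calc ι (p * X 0 ^ (a - min a 0).toNat * X 1 ^ (b - min b 0).toNat)
        * uu ^ (min a 0) * vv ^ (min b 0) * uu ^ (-(min a 0)) * vv ^ (-(min b 0))
      = ι (p * X 0 ^ (a - min a 0).toNat * X 1 ^ (b - min b 0).toNat)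
        * (uu ^ (min a 0) * uu ^ (-(min a 0))) * (vv ^ (min b 0) * vv ^ (-(min b 0))) := by
        ring
    _ = ι (p * X 0 ^ (a - min a 0).toNat * X 1 ^ (b - min b 0).toNat) := by
        rw [← zpow_add₀ uu_ne, ← zpow_add₀ vv_ne]
        simp


lemma ι_apply (p : A) : ι p = MvPolynomial.aeval ![uu, vv] p := rfl

end L19

open L19 in
theorem stmt_19 (c : ℕ) (hc : 2 ≤ c)
    (x : ℤ → FractionRing (MvPolynomial (Fin 2) ℚ))
    (hx1 : x 1 = algebraMap (MvPolynomial (Fin 2) ℚ) _ (X 0))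
    (hx2 : x 2 = algebraMap (MvPolynomial (Fin 2) ℚ) _ (X 1))
    (hrec : ∀ n : ℤ, x (n + 1) = (x n ^ c + 1) / x (n - 1)) :
    ∀ n : ℤ, ∃ (P : MvPolynomial (Fin 2) ℤ) (i j : ℕ),
      x n * x 1 ^ i * x 2 ^ j = MvPolynomial.aeval ![x 1, x 2] P := by
  have hcne : c ≠ 0 := by omega
  have hu : x 1 = uu := hx1
  have hv : x 2 = vv := hx2
  suffices H : ∀ n : ℤ, ∃ (p : A) (a b : ℤ), x n = ι p * uu ^ a * vv ^ b by
    intro n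
    obtain ⟨p, a, b, hrep⟩ := H n
    obtain ⟨P, i, j, hPij⟩ := goal_of_rep hrep
    refine ⟨P, i, j, ?_⟩
    rw [hu, hv, hPij, ι_apply]
  have hx2ne : x 2 ≠ 0 := by rw [hv]; exact vv_ne
  have hx1ne : x 1 ≠ 0 := by rw [hu]; exact uu_ne
  -- basic recurrences at small indices
  have h3 := hrec 2; norm_num at h3
  have h4 := hrec 3; norm_num at h4
  have h2eq := hrec 1; norm_num at h2eq
  have h1eq := hrec 0; norm_num at h1eq
  have hx0ne : x 0 ≠ 0 := by intro h0; rw [h0, div_zero] at h2eq; exact hx2ne h2eq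
  have hE20 : x 2 * x 0 = x 1 ^ c + 1 := ((div_eq_iff hx0ne).mp h2eq.symm).symm
  have hxm1ne : x (-1) ≠ 0 := by intro h0; rw [h0, div_zero] at h1eq; exact hx1ne h1eq
  have hE1m1 : x 1 * x (-1) = x 0 ^ c + 1 := ((div_eq_iff hxm1ne).mp h1eq.symm).symm
  set r0 : A := X 1 ^ c + 1 with hr0def
  set s0 : A := (X 1 ^ c + 1) ^ c + X 0 ^ c with hs0def
  set r1 : A := X 0 ^ c + 1 with hr1def
  set s1 : A := (X 0 ^ c + 1) ^ c + X 1 ^ c with hs1def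
  -- representation of x 3
  have hrx3 : x 3 = ι r0 * uu ^ (-1 : ℤ) * vv ^ (0 : ℤ) := by
    rw [h3, hu, hv, hr0def,
      show ι (X 1 ^ c + 1 : A) = vv ^ c + 1 by rw [map_add, map_pow, ι_X1, map_one],
      zpow_zero, mul_one, zpow_neg_one, div_eq_mul_inv]
  have hE42 : x 4 * x 2 = x 3 ^ c + 1 := by rw [h4, div_mul_cancel₀ _ hx2ne]
  have hWr0 : Wc c r0 (-1 : ℤ) (0 : ℤ) = s0 := by
    have h := Wc_neg c r0 1 0
    simp only [Nat.cast_one, Nat.cast_zero, neg_zero, mul_one, mul_zero, pow_zero, one_mul] at h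
    rw [h]
  have hx3c : x 3 ^ c + 1 = ι s0 * uu ^ (-(c : ℤ)) * vv ^ (0 : ℤ) := by
    have hW := Wc_eq hrx3 c
    rw [hWr0, show min ((c:ℤ) * (-1)) 0 = -(c:ℤ) by omega,
      show min ((c:ℤ) * 0) 0 = (0:ℤ) by omega] at hW
    exact hW
  have hrx4 : x 4 = ι s0 * uu ^ (-(c : ℤ)) * vv ^ (-1 : ℤ) := by
    refine mul_right_cancel₀ hx2ne ?_
    rw [hE42, hx3c, hv, zpow_zero, mul_one, zpow_neg_one, mul_assoc,
      inv_mul_cancel₀ vv_ne, mul_one]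
  -- representation of x 0
  have hrx0 : x 0 = ι r1 * uu ^ (0 : ℤ) * vv ^ (-1 : ℤ) := by
    refine mul_right_cancel₀ hx2ne ?_
    rw [mul_comm (x 0) (x 2), hE20, hu, hr1def,
      show ι (X 0 ^ c + 1 : A) = uu ^ c + 1 by rw [map_add, map_pow, ι_X0, map_one],
      hv, zpow_zero, mul_one, zpow_neg_one, mul_assoc, inv_mul_cancel₀ vv_ne, mul_one]
  have hWr1 : Wc c r1 (0 : ℤ) (-1 : ℤ) = s1 := by
    have h := Wc_neg c r1 0 1
    simp only [Nat.cast_one, Nat.cast_zero, neg_zero, mul_one, mul_zero, pow_zero, one_mul] at h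
    rw [h]
  have hx0c : x 0 ^ c + 1 = ι s1 * uu ^ (0 : ℤ) * vv ^ (-(c : ℤ)) := by
    have hW := Wc_eq hrx0 c
    rw [hWr1, show min ((c:ℤ) * 0) 0 = (0:ℤ) by omega,
      show min ((c:ℤ) * (-1)) 0 = -(c:ℤ) by omega] at hW
    exact hW
  have hrxm1 : x (-1) = ι s1 * uu ^ (-1 : ℤ) * vv ^ (-(c : ℤ)) := by
    refine mul_left_cancel₀ hx1ne ?_
    rw [hE1m1, hx0c, hu, zpow_zero, mul_one, zpow_neg_one]
    calc ι s1 * vv ^ (-(c:ℤ)) = (uu * uu⁻¹) * (ι s1 * vv ^ (-(c:ℤ))) := by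
          rw [mul_inv_cancel₀ uu_ne, one_mul]
      _ = uu * (ι s1 * uu⁻¹ * vv ^ (-(c:ℤ))) := by ring
  -- reducedness / evaluations / coprimality for both seeds
  have hr00 : ¬ X 0 ∣ r0 := not_dvd_of_ev0 0 (by rw [hr0def, ev0_base' c hcne 1]; norm_num)
  have hr01 : ¬ X 1 ∣ r0 := not_dvd_of_ev0 1 (by rw [hr0def, ev0_base' c hcne 1]; norm_num)
  have hs00 : ¬ X 0 ∣ s0 := not_dvd_of_ev0 0 (by rw [hs0def, ev0_base c hcne 0 1]; norm_num)
  have hs01 : ¬ X 1 ∣ s0 := not_dvd_of_ev0 1 (by rw [hs0def, ev0_base c hcne 0 1]; norm_num)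
  have hr10 : ¬ X 0 ∣ r1 := not_dvd_of_ev0 0 (by rw [hr1def, ev0_base' c hcne 0]; norm_num)
  have hr11 : ¬ X 1 ∣ r1 := not_dvd_of_ev0 1 (by rw [hr1def, ev0_base' c hcne 0]; norm_num)
  have hs10 : ¬ X 0 ∣ s1 := not_dvd_of_ev0 0 (by rw [hs1def, ev0_base c hcne 1 0]; norm_num)
  have hs11 : ¬ X 1 ∣ s1 := not_dvd_of_ev0 1 (by rw [hs1def, ev0_base c hcne 1 0]; norm_num)
  have hevr0 : 0 < ev r0 := by rw [hr0def]; simp [ev]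
  have hevr1 : 0 < ev r1 := by rw [hr1def]; simp [ev]
  have hevs0 : 0 < ev s0 := by rw [hs0def]; simp [ev]
  have hevs1 : 0 < ev s1 := by rw [hs1def]; simp [ev]
  have hcop0 : IsRelPrime r0 s0 := by
    rw [hr0def, hs0def]
    exact base_cop c hcne 0 1 (hr0def ▸ hr00) (hr0def ▸ hr01)
      (fun d hd => hd.mul_right _)
  have hcop1 : IsRelPrime r1 s1 := by
    rw [hr1def, hs1def]
    exact base_cop c hcne 1 0 (hr1def ▸ hr10) (hr1def ▸ hr11)
      (fun d hd => hd.mul_left _)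
  have hdvd0 : r0 ∣ Wc c s0 (-(c:ℤ)) (-1 : ℤ) := by
    have h := Wc_neg c s0 c 1
    simp only [Nat.cast_one, mul_one] at h
    rw [h, hr0def, hs0def]
    exact base_dvd c hcne 0 1
  have hdvd1 : r1 ∣ Wc c s1 (-1 : ℤ) (-(c:ℤ)) := by
    have h := Wc_neg c s1 1 c
    simp only [Nat.cast_one, mul_one] at h
    rw [h, hr1def, hs1def, mul_comm ((X 0:A) ^ c) (X 1 ^ (c*c))]
    exact base_dvd c hcne 1 0
  -- forward sequence
  set z : ℕ → KK := fun k => x ((k : ℤ) + 2) with hzdef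
  have hrecz : ∀ k, z (k+1) ≠ 0 → z (k+3) * z (k+1) = z (k+2) ^ c + 1 := by
    intro k hk
    have h := hrec ((k:ℤ) + 4)
    rw [show ((k:ℤ) + 4 + 1) = ((k+3 : ℕ) : ℤ) + 2 by push_cast; ring,
      show ((k:ℤ) + 4 - 1) = ((k+1 : ℕ) : ℤ) + 2 by push_cast; ring,
      show ((k:ℤ) + 4) = ((k+2 : ℕ) : ℤ) + 2 by push_cast; ring] at h
    show x (((k+3:ℕ) : ℤ) + 2) * x (((k+1:ℕ) : ℤ) + 2) = x (((k+2:ℕ) : ℤ) + 2) ^ c + 1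
    rw [h, div_mul_cancel₀ _ hk]
  have hz0 : z 0 = x 2 := by show x _ = x 2; norm_num
  have hz1 : z 1 = x 3 := by show x _ = x 3; norm_num
  have hz2 : z 2 = x 4 := by show x _ = x 4; norm_num
  have hinv0 : Inv c z 0 := by
    refine ⟨X 1, r0, s0, 0, 0, -1, 0, -(c:ℤ), -1, ?_, ?_, ?_, hr00, hr01, hevr0,
      hs00, hs01, hevs0, hcop0, ?_, hdvd0⟩
    · rw [hz0, hv, zpow_zero, zpow_zero, mul_one, mul_one, ι_X1]
    · rw [hz1]; exact hrx3
    · rw [hz2]; exact hrx4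
    · rw [hz2, hz0, hz1]; exact hE42
  have hinvF : ∀ k, Inv c z k := fun k => Nat.rec hinv0 (fun _ ih => step hc hrecz ih) k
  -- backward sequence
  set y : ℕ → KK := fun k => x (1 - (k : ℤ)) with hydef
  have hrecy : ∀ k, y (k+1) ≠ 0 → y (k+3) * y (k+1) = y (k+2) ^ c + 1 := by
    intro k hk
    have h := hrec (-(k:ℤ) - 1)
    rw [show (-(k:ℤ) - 1 + 1) = 1 - ((k+1 : ℕ) : ℤ) by push_cast; ring,
      show (-(k:ℤ) - 1 - 1) = 1 - ((k+3 : ℕ) : ℤ) by push_cast; ring,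
      show (-(k:ℤ) - 1) = 1 - ((k+2 : ℕ) : ℤ) by push_cast; ring] at h
    show x (1 - ((k+3:ℕ) : ℤ)) * x (1 - ((k+1:ℕ) : ℤ)) = x (1 - ((k+2:ℕ) : ℤ)) ^ c + 1
    have hk' : x (1 - ((k+1:ℕ) : ℤ)) ≠ 0 := hk
    have hne : x (1 - ((k+3:ℕ) : ℤ)) ≠ 0 := by
      intro h0; rw [h0, div_zero] at h; exact hk' h
    rw [h, mul_comm, div_mul_cancel₀ _ hne]
  have hy0 : y 0 = x 1 := by show x _ = x 1; norm_num
  have hy1 : y 1 = x 0 := by show x _ = x 0; norm_num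
  have hy2 : y 2 = x (-1) := by show x _ = x (-1); norm_num
  have hinv0' : Inv c y 0 := by
    refine ⟨X 0, r1, s1, 0, 0, 0, -1, -1, -(c:ℤ), ?_, ?_, ?_, hr10, hr11, hevr1,
      hs10, hs11, hevs1, hcop1, ?_, hdvd1⟩
    · rw [hy0, hu, zpow_zero, zpow_zero, mul_one, mul_one, ι_X0]
    · rw [hy1]; exact hrx0
    · rw [hy2]; exact hrxm1
    · rw [hy2, hy0, hy1, mul_comm]; exact hE1m1
  have hinvB : ∀ k, Inv c y k := fun k => Nat.rec hinv0' (fun _ ih => step hc hrecy ih) k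
  -- conclude
  intro n
  rcases le_or_gt 2 n with hn | hn
  · obtain ⟨w, r, s, κ, lam, α, β, γ, δ, hw, -⟩ := hinvF (n - 2).toNat
    have he : ((((n-2).toNat : ℕ) : ℤ) + 2) = n := by omega
    rw [show z ((n-2).toNat) = x ((((n-2).toNat : ℕ) : ℤ) + 2) from rfl, he] at hw
    exact ⟨w, κ, lam, hw⟩
  · obtain ⟨w, r, s, κ, lam, α, β, γ, δ, hw, -⟩ := hinvB (1 - n).toNat
    have he : (1 - (((1-n).toNat : ℕ) : ℤ)) = n := by omega
    rw [show y ((1-n).toNat) = x (1 - (((1-n).toNat : ℕ) : ℤ)) from rfl, he] at hw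
    exact ⟨w, κ, lam, hw⟩
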